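/- arXiv:2604.17161 — 4 statements merged into one kernel-verified Lean document; each statement's English description precedes it below -/
import Mathlib

section
/- Let k be a field of characteristic zero and A_h = k[x][t; h(x)∂_x]. For every i ≥ 1 there exists u_i ∈ A_h such that [t^i, x] = i·h(x)·t^{i−1} + h(x)·u_i and deg_t(u_i) < i − 1, where deg_t denotes the degree in t (with deg_t(0) = −∞). -/
open Polynomial

section
variable {k : Type*} [Field k] {A : Type*} [Ring A] [Algebra k A] (h : k[X]) (x t : A)

lemma aux_comm (p q : k[X]) : aeval x p * aeval x q = aeval x q * aeval x p := by
  rw [← map_mul, ← map_mul, mul_comm]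

lemma aux_pow (hrel : t * x = x * t + aeval x h) (n : ℕ) :
    t * x ^ n = x ^ n * t + aeval x h * ((n : A) * x ^ (n - 1)) := by
  induction n with
  | zero => simp
  | succ m ih =>
    rcases Nat.eq_zero_or_pos m with rfl | hm
    · simpa using hrel
    · have hx : x * x ^ (m - 1) = x ^ m := by
        rw [← pow_succ']; congr 1; omega
      have hcx : x * aeval x h = aeval x h * x := by
        simpa using aux_comm x X h
      calc t * x ^ (m + 1) = (t * x) * x ^ m := by rw [pow_succ', ← mul_assoc]
        _ = x * (t * x ^ m) + aeval x h * x ^ m := by rw [hrel, add_mul, mul_assoc]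
        _ = x * (x ^ m * t) + x * (aeval x h * ((m:A) * x ^ (m-1))) + aeval x h * x ^ m := by
            rw [ih, mul_add]
        _ = x ^ (m + 1) * t + aeval x h * ((↑(m + 1) : A) * x ^ m) := by
            rw [← mul_assoc x (aeval x h), hcx, mul_assoc (aeval x h), ← mul_assoc x (m:A),
              ← (Nat.cast_commute m x).eq, mul_assoc (m:A), hx, ← mul_assoc x (x^m), ← pow_succ']
            push_cast
            rw [add_mul, one_mul, mul_add, add_assoc]

lemma aux_taeval (hrel : t * x = x * t + aeval x h) (p : k[X]) :
    t * aeval x p = aeval x p * t + aeval x h * aeval x (derivative p) := by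
  induction p using Polynomial.induction_on' with
  | add p q hp hq =>
    rw [map_add, mul_add, hp, hq, derivative_add, map_add, mul_add, add_mul]
    abel
  | monomial n a =>
    rw [aeval_monomial, derivative_monomial, aeval_monomial, map_mul, map_natCast,
      ← mul_assoc t, ← Algebra.commutes a t, mul_assoc, aux_pow h x t hrel n, mul_add,
      ← mul_assoc (algebraMap k A a) (aeval x h), Algebra.commutes a (aeval x h),
      mul_assoc (aeval x h), ← mul_assoc (algebraMap k A a) ((n:A)), ← mul_assoc, mul_assoc]

 
def IsRep (i : ℕ) (u : A) : Prop :=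
  ∃ g : ℕ → k[X], u = ∑ j ∈ Finset.range i, aeval x (g j) * t ^ j

lemma rep_zero (i : ℕ) : IsRep (k := k) x t i 0 :=
  ⟨fun _ => 0, by simp⟩

lemma rep_add {i : ℕ} {u v : A} (hu : IsRep (k := k) x t i u) (hv : IsRep (k := k) x t i v) :
    IsRep (k := k) x t i (u + v) := by
  obtain ⟨g1, rfl⟩ := hu; obtain ⟨g2, rfl⟩ := hv
  exact ⟨g1 + g2, by simp [add_mul, Finset.sum_add_distrib]⟩

lemma rep_mono {i i' : ℕ} (hii : i ≤ i') {u : A} (hu : IsRep (k := k) x t i u) :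
    IsRep (k := k) x t i' u := by
  obtain ⟨g, rfl⟩ := hu
  refine ⟨fun j => if j < i then g j else 0, ?_⟩
  rw [← Finset.sum_subset (Finset.range_subset_range.2 hii) (fun j _ hj => ?_)]
  · exact Finset.sum_congr rfl fun j hj => by simp [Finset.mem_range.1 hj]
  · simp only [Finset.mem_range, not_lt] at hj
    simp [Nat.not_lt.2 hj]

lemma rep_smul {i : ℕ} (p : k[X]) {u : A} (hu : IsRep (k := k) x t i u) :
    IsRep (k := k) x t i (aeval x p * u) := by
  obtain ⟨g, rfl⟩ := hu
  exact ⟨fun j => p * g j, by rw [Finset.mul_sum]; simp [mul_assoc]⟩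

lemma rep_single {i j : ℕ} (hj : j < i) (p : k[X]) :
    IsRep (k := k) x t i (aeval x p * t ^ j) := by
  refine ⟨fun j' => if j' = j then p else 0, ?_⟩
  rw [Finset.sum_eq_single j]
  · simp
  · intro b _ hb; simp [hb]
  · intro hmem; exact absurd (Finset.mem_range.2 hj) hmem

lemma rep_sum {i : ℕ} {s : Finset ℕ} {f : ℕ → A} (hf : ∀ j ∈ s, IsRep (k := k) x t i (f j)) :
    IsRep (k := k) x t i (∑ j ∈ s, f j) := by
  classical
  induction s using Finset.induction_on with
  | empty => simpa using rep_zero (k := k) x t i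
  | @insert a s hns ih =>
    rw [Finset.sum_insert hns]
    exact rep_add x t (hf _ (Finset.mem_insert_self _ _))
      (ih fun j hj => hf j (Finset.mem_insert_of_mem hj))

lemma rep_t (hrel : t * x = x * t + aeval x h) {i : ℕ} {u : A}
    (hu : IsRep (k := k) x t i u) : IsRep (k := k) x t (i + 1) (t * u) := by
  obtain ⟨g, rfl⟩ := hu
  rw [Finset.mul_sum]
  refine rep_sum x t fun j hj => ?_
  have hj' := Finset.mem_range.1 hj
  have : t * (aeval x (g j) * t ^ j)
      = aeval x (g j) * t ^ (j + 1) + aeval x (h * derivative (g j)) * t ^ j := by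
    rw [← mul_assoc, aux_taeval h x t hrel (g j), add_mul, mul_assoc, ← pow_succ', map_mul,
      mul_assoc]
  rw [this]
  exact rep_add x t (rep_single x t (by omega) _) (rep_single x t (by omega) _)
end


lemma aux_step {R : Type*} [Ring R] (t x H H' u n p q : R)
    (h1 : t * x = x * t + H) (h2 : t * H = H * t + H * H')
    (hnt : (n : R) * t = t * n) (hnH : n * H = H * n)
    (hq : t * p = q)
    (e1 : q * x = (n * H * p + H * u) + x * q) :
    (t * q) * x - x * (t * q) = (n + 1) * H * q + H * (n * H' * p + t * u + H' * u) := by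
  have A1 : t * (n * H * p) = n * (H * q) + H * (n * (H' * p)) := by
    rw [mul_assoc n H p, ← mul_assoc t n, ← hnt, mul_assoc n t, ← mul_assoc t H, h2,
      add_mul, mul_assoc H t p, hq, mul_add, ← mul_assoc n H, hnH, mul_assoc H n,
      mul_assoc H H' p, ← mul_assoc n H, hnH, mul_assoc H n]
  have A2 : t * (H * u) = H * (t * u) + H * (H' * u) := by
    rw [← mul_assoc t H, h2, add_mul, mul_assoc, mul_assoc]
  have A3 : t * (x * q) = x * (t * q) + H * q := by
    rw [← mul_assoc t x, h1, add_mul, mul_assoc]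
  calc (t * q) * x - x * (t * q) = t * (q * x) - x * (t * q) := by rw [mul_assoc]
    _ = t * (n * H * p) + t * (H * u) + t * (x * q) - x * (t * q) := by
        rw [e1, mul_add, mul_add]
    _ = (n + 1) * H * q + H * (n * H' * p + t * u + H' * u) := by
        rw [A1, A2, A3, add_mul, one_mul, mul_add, mul_add, add_mul, mul_assoc n H q,
          mul_assoc n H' p]
        abel


/-- In `A_h`, for every `i ≥ 1` there is `u_i` with
`[tⁱ, x] = i·h(x)·t^{i-1} + h(x)·u_i` and `deg_t(u_i) < i - 1`
(`u_i` is a sum of terms `g_j(x)·tʲ` with `j < i - 1`). -/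
theorem stmt5 (k : Type*) [Field k] [CharZero k] (h : k[X])
    (A : Type*) [Ring A] [Algebra k A] (x t : A)
    (hrel : t * x = x * t + aeval x h) :
    ∀ i : ℕ, 1 ≤ i → ∃ u : A,
      t ^ i * x - x * t ^ i = (i : A) * aeval x h * t ^ (i - 1) + aeval x h * u ∧
      ∃ g : ℕ → k[X], u = ∑ j ∈ Finset.range (i - 1), aeval x (g j) * t ^ j := by
  intro i hi
  induction i, hi using Nat.le_induction with
  | base => exact ⟨0, by simp [hrel], ⟨fun _ => 0, by simp⟩⟩
  | succ i hi IH =>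
    obtain ⟨u, heq, hrep⟩ := IH
    have hq : t * t ^ (i - 1) = t ^ i := by rw [← pow_succ']; congr 1; omega
    have e1 : t ^ i * x = ((i : A) * aeval x h * t ^ (i - 1) + aeval x h * u) + x * t ^ i :=
      eq_add_of_sub_eq heq
    have key := aux_step t x (aeval x h) (aeval x (derivative h)) u (i : A) (t ^ (i - 1))
      (t ^ i) hrel (aux_taeval h x t hrel h) (Nat.cast_commute i t).eq
      (Nat.cast_commute i (aeval x h)).eq hq e1
    refine ⟨(i : A) * aeval x (derivative h) * t ^ (i - 1) + t * u
        + aeval x (derivative h) * u, ?_, ?_⟩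
    · rw [show ((i + 1 : ℕ) : A) = (i : A) + 1 by push_cast; ring, Nat.add_sub_cancel, pow_succ']
      exact key
    · simp only [Nat.add_sub_cancel]
      have h1 : IsRep (k := k) x t i ((i : A) * aeval x (derivative h) * t ^ (i - 1)) := by
        have := rep_single (k := k) x t (show i - 1 < i by omega) ((i : k[X]) * derivative h)
        simpa using this
      have h2 : IsRep (k := k) x t i (t * u) := by
        have := rep_t h x t hrel (i := i - 1) hrep
        rwa [Nat.sub_add_cancel hi] at this
      have h3 : IsRep (k := k) x t i (aeval x (derivative h) * u) :=
        rep_mono x t (Nat.sub_le i 1) (rep_smul x t (derivative h) hrep)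
      exact rep_add x t (rep_add x t h1 h2) h3
end

section
/- Let k be a field of characteristic zero, h ∈ k[x] with deg h ≥ 1, A_h = k[x][t; h(x)∂_x], and suppose a derivation D of A_h is both inner (D = ad_w for some w ∈ A_h) and of the form Δ_{s(x)} (i.e., D(x) = 0 and D(t) = s(x) with s ∈ k[x], deg s < deg h). Then D = 0, w ∈ k, and s = 0. -/
open Polynomial

section
variable {k : Type*} [Field k] {h : k[X]}
    {A : Type*} [Ring A] [Algebra k A] {x t : A}
    (hrel : t * x = x * t + aeval x h)

lemma commx (p : k[X]) : aeval x p * x = x * aeval x p := by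
  calc aeval x p * x = aeval x (p * X) := by simp [map_mul]
    _ = aeval x (X * p) := by rw [mul_comm]
    _ = x * aeval x p := by simp [map_mul]

include hrel in
lemma L1 (p : k[X]) :
    t * aeval x p = aeval x p * t + aeval x (h * derivative p) := by
  induction p using Polynomial.induction_on with
  | C a => simp [Algebra.commutes]
  | add p q hp hq =>
      simp only [map_add, mul_add, add_mul, hp, hq, derivative_add]
      abel
  | monomial n a ih =>
      have e1 : (C a * X ^ (n + 1)) = (C a * X ^ n) * X := by ring
      have e2 : h * derivative (C a * X ^ (n+1)) =
          h * derivative (C a * X ^ n) * X + (C a * X ^ n) * h := by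
        cases n with
        | zero => simpa using (mul_comm h (C a))
        | succ m => simp [derivative_mul]; ring
      rw [e1, map_mul, aeval_X, ← mul_assoc, ih, add_mul, mul_assoc, hrel, ← e1, e2]
      simp only [map_add, map_mul, aeval_X, e1, mul_add, ← mul_assoc]
      abel

end

section
variable (k : Type*) [Field k]
    (A : Type*) [Ring A] [Algebra k A]

noncomputable def Phi (x t : A) : (ℕ →₀ k[X]) →ₗ[k] A :=
  Finsupp.lsum k fun i => (LinearMap.mulRight k (t ^ i)).comp (aeval x).toLinearMap

variable {k A}

lemma Phi_apply (x t : A) (c : ℕ →₀ k[X]) :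
    Phi k A x t c = c.sum fun i f => aeval x f * t ^ i := by
  simp [Phi, Finsupp.lsum_apply, Finsupp.sum, LinearMap.mulRight_apply]

lemma Phi_single (x t : A) (i : ℕ) (p : k[X]) :
    Phi k A x t (Finsupp.single i p) = aeval x p * t ^ i := by
  rw [Phi_apply, Finsupp.sum_single_index] ; simp

end

section
variable {k : Type*} [Field k] {h : k[X]}
    {A : Type*} [Ring A] [Algebra k A] {x t : A}
    (hrel : t * x = x * t + aeval x h)

include hrel in
lemma Tmul (c : ℕ →₀ k[X]) :
    t * Phi k A x t c = Phi k A x t (c.mapDomain (· + 1))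
      + Phi k A x t (c.mapRange (fun p => h * derivative p) (by simp)) := by
  rw [Phi_apply, Phi_apply, Phi_apply, Finsupp.sum_mapDomain_index_inj (add_left_injective 1),
    Finsupp.sum_mapRange_index (by intro i; simp), Finsupp.sum, Finsupp.sum, Finsupp.sum,
    Finset.mul_sum, ← Finset.sum_add_distrib]
  refine Finset.sum_congr rfl fun j _ => ?_
  rw [← mul_assoc, L1 hrel, add_mul, mul_assoc, ← pow_succ']

include hrel in
lemma L2 (i : ℕ) : ∃ c : ℕ →₀ k[X], t ^ i * x - x * t ^ i = Phi k A x t c ∧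
    c (i - 1) = i • h ∧ ∀ j ∈ c.support, j < i := by
  induction i with
  | zero => exact ⟨0, by simp [Phi_apply], by simp, by simp⟩
  | succ m ih =>
    obtain ⟨c, hc, hval, hsupp⟩ := ih
    classical
    refine ⟨Finsupp.single m h + (c.mapDomain (· + 1)
        + c.mapRange (fun p => h * derivative p) (by simp)), ?_, ?_, ?_⟩
    · have h1 : t ^ m * x = x * t ^ m + Phi k A x t c := by
        rw [← hc]; abel
      have : t ^ (m + 1) * x = t * (t ^ m * x) := by rw [pow_succ', mul_assoc]
      rw [this, h1, mul_add, ← mul_assoc, hrel, Tmul hrel, map_add, map_add, Phi_single]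
      rw [pow_succ', add_mul, mul_assoc x t (t ^ m)]
      abel
    · have e0 : c m = 0 := by
        by_contra hne
        exact absurd (hsupp m (Finsupp.mem_support_iff.2 hne)) (lt_irrefl m)
      have e1 : (c.mapDomain (· + 1)) m = m • h := by
        cases m with
        | zero =>
          rw [Finsupp.mapDomain_notin_range]
          · simp
          · rintro ⟨a, ha⟩; simp at ha
        | succ n =>
          have : (n : ℕ) + 1 = n + 1 := rfl
          rw [show (n + 1 : ℕ) = (fun j => j + 1) n from rfl,
            Finsupp.mapDomain_apply (fun a b => by omega)]
          simpa using hval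
      simp only [Finsupp.add_apply, Finsupp.mapRange_apply, show m + 1 - 1 = m from rfl,
        show 1 + m - 1 = m by omega, e0, e1, Finsupp.single_eq_same]
      simp only [derivative_zero, mul_zero, add_zero, succ_nsmul]
      ring
    · intro j hj
      have := Finsupp.support_add hj
      simp only [Finset.mem_union] at this
      rcases this with h1 | h1
      · have := Finsupp.support_single_subset h1
        simp at this; omega
      · have h2' := Finsupp.support_add h1
        simp only [Finset.mem_union] at h2'
        rcases h2' with h2 | h2
        · have := Finsupp.mapDomain_support h2
          simp only [Finset.mem_image] at this
          obtain ⟨a, ha, rfl⟩ := this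
          have := hsupp a ha; omega
        · have := Finsupp.support_mapRange h2
          have := hsupp j this; omega

lemma PhiMul (q : k[X]) (c : ℕ →₀ k[X]) :
    aeval x q * Phi k A x t c
      = Phi k A x t (c.mapRange (fun p => q * p) (mul_zero q)) := by
  rw [Phi_apply, Phi_apply, Finsupp.sum_mapRange_index (by simp), Finsupp.sum, Finsupp.sum,
    Finset.mul_sum]
  exact Finset.sum_congr rfl fun j _ => by rw [← mul_assoc, ← map_mul]

end

/-- If a derivation `D` of `A_h` (with `deg h ≥ 1`) is both inner, `D = ad_w`,
and of the form `Δ_{s(x)}` (so `ad_w(x) = 0` and `ad_w(t) = s(x)` with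
`deg s < deg h`), then `D = 0`, `w ∈ k` and `s = 0`. -/
theorem stmt9 (k : Type*) [Field k] [CharZero k] (h : k[X]) (hdeg : 1 ≤ h.natDegree)
    (A : Type*) [Ring A] [Algebra k A] (x t : A)
    (hrel : t * x = x * t + aeval x h)
    (hbasis : ∀ u : A, ∃! c : ℕ →₀ k[X], u = c.sum fun i f => aeval x f * t ^ i)
    (w : A) (s : k[X]) (hs : s.degree < h.degree)
    (hDx : w * x - x * w = 0) (hDt : w * t - t * w = aeval x s) :
    s = 0 ∧ (∃ c : k, w = algebraMap k A c) ∧ ∀ b : A, w * b - b * w = 0 := by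
  classical
  have hh0 : h ≠ 0 := fun e => by simp [e] at hdeg
  have PhiInj : ∀ c c' : ℕ →₀ k[X], Phi k A x t c = Phi k A x t c' → c = c' := by
    intro c c' hcc
    obtain ⟨d, -, hu⟩ := hbasis (Phi k A x t c)
    rw [hu c (Phi_apply x t c).symm, hu c' (by rw [hcc]; exact (Phi_apply x t c').symm)]
  have aInj : ∀ p q : k[X], aeval x p = aeval x q → p = q := by
    intro p q hpq
    have := PhiInj (Finsupp.single 0 p) (Finsupp.single 0 q)
      (by rw [Phi_single, Phi_single, hpq])
    exact Finsupp.single_injective 0 this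
  obtain ⟨f, hf, -⟩ := hbasis w
  have hw : w = Phi k A x t f := by rw [Phi_apply]; exact hf
  -- f is supported at 0
  have hsupp0 : f.support ⊆ {0} := by
    by_contra hcon
    obtain ⟨j, hj, hj0⟩ := by
      simpa [Finset.subset_iff, Finsupp.mem_support_iff] using hcon
    have hne : f.support.Nonempty := ⟨j, Finsupp.mem_support_iff.2 hj⟩
    set n := f.support.max' hne with hn
    have hn1 : 1 ≤ n := by
      have := Finset.le_max' f.support j (Finsupp.mem_support_iff.2 hj)
      omega
    choose c hcEq hcVal hcSupp using fun i => L2 hrel (h := h) (x := x) (t := t) i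
    have key : w * x - x * w
        = Phi k A x t (∑ i ∈ f.support, (c i).mapRange (fun p => f i * p) (mul_zero _)) := by
      rw [map_sum, hw, Phi_apply, Finsupp.sum, Finset.sum_mul, Finset.mul_sum,
        ← Finset.sum_sub_distrib]
      refine Finset.sum_congr rfl fun i _ => ?_
      rw [← PhiMul, ← hcEq i, mul_assoc, ← mul_assoc x _ _, ← commx (f i), mul_assoc,
        mul_sub]
    have hC0 : (∑ i ∈ f.support, (c i).mapRange (fun p => f i * p) (mul_zero _)) = 0 := by
      apply PhiInj
      rw [← key, hDx, map_zero]
    have hval : (∑ i ∈ f.support, (c i).mapRange (fun p => f i * p) (mul_zero _)) (n - 1)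
        = f n * (n • h) := by
      rw [Finset.sum_apply']
      rw [Finset.sum_eq_single n]
      · rw [Finsupp.mapRange_apply, hcVal n]
      · intro i hi hin
        have hile : i ≤ n := Finset.le_max' f.support i hi
        have hilt : i < n := lt_of_le_of_ne hile hin
        rw [Finsupp.mapRange_apply]
        have : c i (n - 1) = 0 := by
          by_contra hne'
          have := hcSupp i (n - 1) (Finsupp.mem_support_iff.2 hne')
          omega
        rw [this, mul_zero]
      · intro hnn
        exact absurd (f.support.max'_mem hne) hnn
    rw [hC0] at hval
    have hfn : f n ≠ 0 := Finsupp.mem_support_iff.1 (f.support.max'_mem hne)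
    have : (n • h : k[X]) ≠ 0 := by
      rw [nsmul_eq_mul]
      exact mul_ne_zero (Nat.cast_ne_zero.2 (by omega)) hh0
    exact this (by
      rcases mul_eq_zero.1 hval.symm with h1 | h1
      · exact absurd h1 hfn
      · exact h1)
  -- so w = aeval x g with g = f 0
  set g : k[X] := f 0 with hg
  have hfg : f = Finsupp.single 0 g := (Finsupp.support_subset_singleton).1 hsupp0
  have hwg : w = aeval x g := by rw [hw, hfg, Phi_single, pow_zero, mul_one]
  -- use hDt
  have hsg : s = -(h * derivative g) := by
    apply aInj
    rw [← hDt, hwg, L1 hrel g, map_neg]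
    abel
  have hg' : derivative g = 0 := by
    by_contra hg'
    have hdegle : h.degree ≤ s.degree := by
      rw [hsg, degree_neg, degree_mul]
      have : (0 : WithBot ℕ) ≤ (derivative g).degree := zero_le_degree_iff.2 hg'
      calc h.degree = h.degree + 0 := by simp
        _ ≤ h.degree + (derivative g).degree := by gcongr
    exact absurd hs (not_lt.2 hdegle)
  have hs0 : s = 0 := by rw [hsg, hg', mul_zero, neg_zero]
  have hgdeg : g.natDegree = 0 := natDegree_eq_zero_of_derivative_eq_zero hg'
  obtain ⟨a, ha⟩ : ∃ a : k, g = C a := ⟨g.coeff 0, (eq_C_of_natDegree_eq_zero hgdeg)⟩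
  have hwa : w = algebraMap k A a := by rw [hwg, ha, aeval_C]
  refine ⟨hs0, ⟨a, hwa⟩, fun b => ?_⟩
  rw [hwa, Algebra.commutes, sub_self]
end

section
/- Let k be a field of characteristic zero, h ∈ k[x] with deg h = N ≥ 1. For a ∈ k* and r ∈ k[x], let σ_r and τ_a be the automorphisms of A_h = k[x][t; h(x)∂_x] determined by σ_r(x)=x, σ_r(t)=t+r(x), τ_a(x)=a·x, τ_a(t)=a^{N−1}·t (assuming h(a·x)=a^N h(x)). Then τ_a ∘ σ_r = σ_{a^{1−N}·r(a·x)} ∘ τ_a. -/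
open Polynomial

/-- In `Aut(A_h)` (with `deg h = N ≥ 1`, `h(a·x) = a^N·h(x)`), one has
`τ_a ∘ σ_r = σ_{a^{1-N}·r(a·x)} ∘ τ_a`. -/
theorem stmt14 (k : Type*) [Field k] [CharZero k] (h : k[X]) (N : ℕ) (hN : 1 ≤ N)
    (hdeg : h.natDegree = N)
    (A : Type*) [Ring A] [Algebra k A] (x t : A)
    (hrel : t * x = x * t + aeval x h)
    (hgen : Algebra.adjoin k {x, t} = ⊤)
    (a : k) (ha : a ≠ 0) (hcond : h.comp (C a * X) = C (a ^ N) * h)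
    (r : k[X]) (σr τa σr' : A ≃ₐ[k] A)
    (hσx : σr x = x) (hσt : σr t = t + aeval x r)
    (hτx : τa x = algebraMap k A a * x)
    (hτt : τa t = algebraMap k A (a ^ (N - 1)) * t)
    (hσ'x : σr' x = x)
    (hσ't : σr' t = t + aeval x ((a ^ (1 - (N : ℤ))) • r.comp (C a * X))) :
    σr.trans τa = τa.trans σr' := by
  have hpow : a ^ (N - 1) * a ^ (1 - (N : ℤ)) = 1 := by
    have : ((N - 1 : ℕ) : ℤ) = (N : ℤ) - 1 := by omega
    rw [← zpow_natCast a (N - 1), this, ← zpow_add₀ ha]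
    norm_num
  have key : ∀ y ∈ ({x, t} : Set A), (σr.trans τa).toAlgHom y = (τa.trans σr').toAlgHom y := by
    rintro y (rfl | rfl)
    · show τa (σr y) = σr' (τa y)
      rw [hσx, hτx, map_mul, AlgEquiv.commutes, hσ'x]
    · show τa (σr y) = σr' (τa y)
      rw [hσt, hτt, map_add, hτt, map_mul, AlgEquiv.commutes, hσ't]
      have h1 : τa (aeval x r) = aeval (τa x) r := by
        simpa using (Polynomial.aeval_algHom_apply τa.toAlgHom x r).symm
      rw [h1, hτx, mul_add]
      congr 1
      have h2 : aeval x ((a ^ (1 - (N : ℤ))) • r.comp (C a * X))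
          = (a ^ (1 - (N : ℤ))) • aeval x (r.comp (C a * X)) := by
        exact map_smul (aeval x) _ _
      rw [h2, Polynomial.aeval_comp]
      simp only [map_mul, aeval_C, aeval_X]
      rw [Algebra.smul_def, ← mul_assoc, ← map_mul, hpow, map_one, one_mul]
  exact AlgEquiv.ext fun y =>
    AlgHom.congr_fun (AlgHom.ext_of_adjoin_eq_top hgen key) y
end

section
/- Let k be a field of characteristic zero, h ∈ k[x] with deg h = N ≥ 1, and p ∈ k[x] with deg p ≥ N. Write p = p₁·h + p₂ by division with remainder, deg p₂ < N. Then in A_h = k[x][t; h(x)∂_x], the derivation D_p (defined by D_p(x)=0, D_p(t)=p(x)) decomposes as D_p = ad_w + Δ_{p₂}, where w ∈ k[x] is any polynomial with w' = −p₁, ad_w(b) = w·b − b·w, and Δ_{p₂} is the derivation with Δ(x)=0, Δ(t)=p₂(x). -/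
open Polynomial

/-- For `deg p ≥ deg h = N ≥ 1`, write `p = p₁·h + p₂` with `deg p₂ < N`.
Then the derivation `D_p` of `A_h` decomposes as `D_p = ad_w + Δ_{p₂}` for any
`w ∈ k[x]` with `w' = -p₁`. -/
theorem stmt18 (k : Type*) [Field k] [CharZero k] (h : k[X]) (N : ℕ) (hN : 1 ≤ N)
    (hdeg : h.natDegree = N)
    (A : Type*) [Ring A] [Algebra k A] (x t : A)
    (hrel : t * x = x * t + aeval x h)
    (hgen : Algebra.adjoin k {x, t} = ⊤)
    (p p₁ p₂ : k[X]) (hp : N ≤ p.natDegree) (hdiv : p = p₁ * h + p₂)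
    (hp₂ : p₂.degree < h.degree)
    (w : k[X]) (hw : derivative w = -p₁)
    (Dp Δ : A →ₗ[k] A)
    (hDpleib : ∀ a b : A, Dp (a * b) = a * Dp b + Dp a * b)
    (hΔleib : ∀ a b : A, Δ (a * b) = a * Δ b + Δ a * b)
    (hDpx : Dp x = 0) (hDpt : Dp t = aeval x p)
    (hΔx : Δ x = 0) (hΔt : Δ t = aeval x p₂) :
    ∀ b : A, Dp b = (aeval x w * b - b * aeval x w) + Δ b := by
  -- images of `aeval x` commute with `x`
  have comm : ∀ q : k[X], x * aeval x q = aeval x q * x := by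
    intro q
    have : Commute (aeval x X) (aeval x q) := (Commute.all X q).map (aeval x)
    simpa [aeval_X] using this.eq
  -- commutation of `t` with powers of `x`
  have pow : ∀ n : ℕ, t * x ^ (n + 1)
      = x ^ (n + 1) * t + ((n : A) + 1) * (x ^ n * aeval x h) := by
    intro n
    induction n with
    | zero => simpa using hrel
    | succ m ih =>
      have e1 : t * x ^ (m + 2) = (t * x ^ (m + 1)) * x := by
        rw [pow_succ, ← mul_assoc]
      rw [e1, ih, add_mul, mul_assoc, hrel, mul_assoc, mul_assoc,
        ← comm h, ← mul_assoc (x ^ m), ← pow_succ, mul_add,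
        ← mul_assoc (x ^ (m + 1)), ← pow_succ]
      push_cast
      noncomm_ring
  -- key: the commutator of any polynomial in x with t
  have key : ∀ q : k[X], aeval x q * t - t * aeval x q
      = - aeval x (derivative q * h) := by
    intro q
    induction q using Polynomial.induction_on' with
    | add f g hf hg =>
      simp only [map_add, add_mul, mul_add, neg_add, ← hf, ← hg]
      abel
    | monomial n a =>
      cases n with
      | zero =>
        simp [aeval_monomial, Algebra.commutes]
      | succ m =>
        have hc : t * (algebraMap k A a * x ^ (m + 1))
            = algebraMap k A a * (t * x ^ (m + 1)) := by
          rw [← mul_assoc, ← Algebra.commutes, mul_assoc]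
        rw [aeval_monomial, hc, pow, derivative_monomial, map_mul, aeval_monomial,
          Nat.add_sub_cancel, map_mul, map_natCast]
        push_cast
        noncomm_ring
  -- the commutator of w(x) with t equals aeval x (p₁ * h)
  have keyw : aeval x w * t - t * aeval x w = aeval x (p₁ * h) := by
    rw [key w, hw]; simp
  -- both sides are derivations; compare on generators and extend
  suffices H : ∀ b ∈ Algebra.adjoin k {x, t},
      Dp b = (aeval x w * b - b * aeval x w) + Δ b by
    intro b
    exact H b (hgen ▸ Algebra.mem_top)
  intro b hb
  induction hb using Algebra.adjoin_induction with
  | mem y hy =>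
    rcases hy with rfl | rfl
    · rw [hDpx, hΔx, ← comm w]; abel
    · rw [hDpt, hΔt, keyw, hdiv, map_add]
  | algebraMap r =>
    have hone : Dp 1 = 0 := by
      have := hDpleib 1 1
      simpa using this.symm
    have hone' : Δ 1 = 0 := by
      have := hΔleib 1 1
      simpa using this.symm
    have : (algebraMap k A) r = r • (1 : A) := by
      rw [Algebra.algebraMap_eq_smul_one]
    rw [this, map_smul, map_smul, hone, hone']
    simp [mul_smul_comm, smul_mul_assoc]
  | add y z hy hz hy' hz' =>
    rw [map_add, map_add, hy', hz']
    simp only [mul_add, add_mul]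
    abel
  | mul y z hy hz hy' hz' =>
    rw [hDpleib, hΔleib, hy', hz']
    noncomm_ring
end
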